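/- Let V be an n-dimensional vector space over a field K of characteristic zero and let λ be a Young tableau with l boxes and Young symmetrizer c_λ ∈ K[S_l]. Then the Schur module 𝕊_λ(V) := V^{⊗l} ⊗_{K[S_l]} K[S_l]c_λ is zero if and only if the Young diagram of λ has strictly more than n rows. -/

import Mathlib

open scoped Classical BigOperators

section Aux

variable {K V : Type} [Field K] [AddCommGroup V] [Module K V] {l : ℕ}

private lemma update_comp_perm [DecidableEq (Fin l)] (u : Fin l → V) (q : Equiv.Perm (Fin l)) (j : Fin l) (x : V) :
    (fun i => Function.update u j x (q.symm i)) =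
      Function.update (fun i => u (q.symm i)) (q j) x := by
  funext i
  rcases eq_or_ne i (q j) with rfl | h
  · rw [Equiv.symm_apply_apply, Function.update_self, Function.update_self]
  · rw [Function.update_of_ne h, Function.update_of_ne]
    intro hc
    exact h (by rw [← hc, Equiv.apply_symm_apply])

variable (p : Fin l → Prop) [DecidablePred p]

/-- Fill in the coordinates satisfying `p` with `v`, keep `f` elsewhere. -/
private noncomputable def combine (f : Fin l → V) (v : {i : Fin l // p i} → V) : Fin l → V :=
  fun i => if h : p i then v ⟨i, h⟩ else f i

private lemma combine_update [DecidableEq (Fin l)] [DecidableEq {i : Fin l // p i}] (f : Fin l → V) (v : {i : Fin l // p i} → V)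
    (k : {i : Fin l // p i}) (x : V) :
    combine p f (Function.update v k x) = Function.update (combine p f v) ↑k x := by
  funext i
  rcases eq_or_ne i ↑k with rfl | h
  · simp [combine, k.2]
  · rw [Function.update_of_ne h]
    show _ = combine p f v i
    unfold combine
    by_cases hi : p i
    · rw [dif_pos hi, dif_pos hi, Function.update_of_ne]
      exact fun hc => h (congrArg Subtype.val hc)
    · rw [dif_neg hi, dif_neg hi]

private lemma combine_self (f : Fin l → V) :
    combine p f (fun i => f ↑i) = f := by
  funext i
  unfold combine
  split <;> rfl

/-- The multilinear map `v ↦ ⨂ᵢ (combine p f v) (q⁻¹ i)`. -/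
private noncomputable def tensorIns (f : Fin l → V) (q : Equiv.Perm (Fin l)) :
    MultilinearMap K (fun _ : {i : Fin l // p i} => V)
      (PiTensorProduct K (fun _ : Fin l => V)) where
  toFun v := PiTensorProduct.tprod K (fun i => combine p f v (q.symm i))
  map_update_add' v k x y := by
    simp only [combine_update, update_comp_perm]
    exact MultilinearMap.map_update_add _ _ _ _ _
  map_update_smul' v k c x := by
    simp only [combine_update, update_comp_perm]
    exact MultilinearMap.map_update_smul _ _ _ _ _


private lemma combine_comp_swap (f : Fin l → V) (v : {i : Fin l // p i} → V)
    (i j : {i : Fin l // p i}) (hv : v i = v j) (x : Fin l) :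
    combine p f v (Equiv.swap (i : Fin l) (j : Fin l) x) = combine p f v x := by
  rcases eq_or_ne x ↑i with rfl | hxi
  · rw [Equiv.swap_apply_left]
    unfold combine
    rw [dif_pos i.2, dif_pos j.2]
    simpa using hv.symm
  rcases eq_or_ne x ↑j with rfl | hxj
  · rw [Equiv.swap_apply_right]
    unfold combine
    rw [dif_pos i.2, dif_pos j.2]
    simpa using hv
  · rw [Equiv.swap_apply_of_ne_of_ne hxi hxj]

/-- The signed sum over a swap-closed set of permutations of permuted pure tensors
vanishes when there are more marked coordinates than the dimension. -/
private lemma signed_sum_eq_zero [CharZero K] [FiniteDimensional K V]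
    (hlt : Module.finrank K V < Fintype.card {i : Fin l // p i})
    (Q : Equiv.Perm (Fin l) → Prop) [DecidablePred Q]
    (hQ : ∀ (i j : {i : Fin l // p i}), i ≠ j → ∀ q, Q q →
      Q (q * Equiv.swap (i : Fin l) (j : Fin l)))
    (f : Fin l → V) :
    ∑ q ∈ Finset.univ.filter Q, ((Equiv.Perm.sign q : ℤ) : K) •
      PiTensorProduct.tprod K (fun i => f (q.symm i)) = 0 := by
  classical
  set F : MultilinearMap K (fun _ : {i : Fin l // p i} => V)
      (PiTensorProduct K (fun _ : Fin l => V)) :=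
    ∑ q ∈ Finset.univ.filter Q, ((Equiv.Perm.sign q : ℤ) : K) • tensorIns p f q with hF
  have hFapp : ∀ v, F v = ∑ q ∈ Finset.univ.filter Q,
      ((Equiv.Perm.sign q : ℤ) : K) •
        PiTensorProduct.tprod K (fun i => combine p f v (q.symm i)) := by
    intro v
    rw [hF]
    simp [tensorIns]
  have halt : ∀ (v : {i : Fin l // p i} → V) (i j : {i : Fin l // p i}),
      v i = v j → i ≠ j → F v = 0 := by
    intro v i j hv hij
    have hij' : (i : Fin l) ≠ (j : Fin l) := fun h => hij (Subtype.ext h)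
    rw [hFapp]
    apply Finset.sum_involution
      (g := fun q _ => q * Equiv.swap (i : Fin l) (j : Fin l))
    · intro q hq
      have hsign : ((Equiv.Perm.sign (q * Equiv.swap (i : Fin l) (j : Fin l)) : ℤ) : K)
          = -((Equiv.Perm.sign q : ℤ) : K) := by
        rw [Equiv.Perm.sign_mul, Equiv.Perm.sign_swap hij']
        push_cast
        ring
      have htp : (PiTensorProduct.tprod K
            (fun m => combine p f v ((q * Equiv.swap (i : Fin l) (j : Fin l)).symm m)))
          = PiTensorProduct.tprod K (fun m => combine p f v (q.symm m)) := by
        congr 1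
        funext m
        have : (q * Equiv.swap (i : Fin l) (j : Fin l)).symm m
            = Equiv.swap (i : Fin l) (j : Fin l) (q.symm m) := by
          simp [Equiv.Perm.mul_def, Equiv.symm_trans_apply]
        rw [this, combine_comp_swap p f v i j hv]
      rw [hsign, htp, neg_smul]
      exact add_neg_cancel _
    · intro q hq hne
      intro hc
      have h1 : q * Equiv.swap (i : Fin l) (j : Fin l) = q * 1 := by rw [mul_one]; exact hc
      have h2 : Equiv.swap (i : Fin l) (j : Fin l) = 1 := mul_left_cancel h1
      have h3 : (j : Fin l) = (i : Fin l) := by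
        have := congrArg (fun e : Equiv.Perm (Fin l) => e (i : Fin l)) h2
        simpa using this
      exact hij' h3.symm
    · intro q hq
      exact Finset.mem_filter.2 ⟨Finset.mem_univ _, hQ i j hij q (Finset.mem_filter.1 hq).2⟩
    · intro q hq
      rw [mul_assoc, Equiv.swap_mul_self, mul_one]
  let G : AlternatingMap K V (PiTensorProduct K (fun _ : Fin l => V)) {i : Fin l // p i} :=
    { toMultilinearMap := F, map_eq_zero_of_eq' := halt }
  have hdep : ¬ LinearIndependent K (fun i : {i : Fin l // p i} => f ↑i) := by
    intro h
    exact absurd h.fintype_card_le_finrank (by omega)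
  have h0 : G (fun i : {i : Fin l // p i} => f ↑i) = 0 :=
    G.map_linearDependent _ hdep
  have : F (fun i : {i : Fin l // p i} => f ↑i) = 0 := h0
  rw [hFapp, combine_self] at this
  exact this

end Aux

private lemma card_col0 {l : ℕ} (μ : YoungDiagram) (T : ↥μ.cells ≃ Fin l) :
    Fintype.card {i : Fin l // ((T.symm i : ℕ × ℕ)).2 = 0} = μ.colLen 0 := by
  classical
  rw [Fintype.card_subtype, μ.colLen_eq_card]
  apply Finset.card_bij (fun i _ => ((T.symm i : ℕ × ℕ)))
  · intro a ha
    rw [YoungDiagram.mem_col_iff]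
    exact ⟨(YoungDiagram.mem_cells _).1 (T.symm a).2, (Finset.mem_filter.1 ha).2⟩
  · intro a _ b _ h
    have := Subtype.ext h
    exact T.symm.injective this
  · intro c hc
    rw [YoungDiagram.mem_col_iff] at hc
    refine ⟨T ⟨c, (YoungDiagram.mem_cells _).2 hc.1⟩, ?_, ?_⟩
    · apply Finset.mem_filter.2
      refine ⟨Finset.mem_univ _, ?_⟩
      rw [Equiv.symm_apply_apply]
      exact hc.2
    · rw [Equiv.symm_apply_apply]

private lemma prod_boolean {K : Type} [Field K] {α : Type} [Fintype α] (c : α → Prop)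
    {d : ∀ i, Decidable (c i)} {d' : Decidable (∀ i, c i)} :
    (∏ i : α, (if c i then (1 : K) else 0)) = if ∀ i, c i then 1 else 0 := by
  by_cases h : ∀ i, c i
  · rw [if_pos h]
    apply Finset.prod_eq_one
    intro i _
    rw [if_pos (h i)]
  · rw [if_neg h]
    push_neg at h
    obtain ⟨i, hi⟩ := h
    exact Finset.prod_eq_zero (Finset.mem_univ i) (by rw [if_neg hi])


/-- The endomorphism of `V^{⊗ l}` induced by the Young symmetrizer `c_λ` of a Young tableau,
i.e. of a bijective filling `T : μ.cells ≃ Fin l` of a Young diagram `μ` with `l` boxes: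
the sum over pairs `(p, q)` with `p` in the row stabilizer and `q` in the (signed) column
stabilizer of `sign q` times the permutation action of `p * q` on the tensor factors.
Its image is the Schur module `𝕊_λ(V) = V^{⊗l} ⊗_{K[S_l]} K[S_l]c_λ` (char 0). -/
noncomputable def youngSymmetrizerAction (K V : Type) [Field K] [AddCommGroup V] [Module K V]
    (l : ℕ) (μ : YoungDiagram) (T : ↥μ.cells ≃ Fin l) :
    PiTensorProduct K (fun _ : Fin l => V) →ₗ[K] PiTensorProduct K (fun _ : Fin l => V) :=
  ∑ p : Equiv.Perm (Fin l), ∑ q : Equiv.Perm (Fin l),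
    (if (∀ i, ((T.symm (p i)) : ℕ × ℕ).1 = ((T.symm i) : ℕ × ℕ).1)
        ∧ (∀ i, ((T.symm (q i)) : ℕ × ℕ).2 = ((T.symm i) : ℕ × ℕ).2)
      then ((Equiv.Perm.sign q : ℤ) : K) else 0) •
      (PiTensorProduct.reindex K (fun _ : Fin l => V) (p * q)).toLinearMap

/-- Over a field `K` of characteristic zero, for an `n`-dimensional vector space `V` and a
Young tableau `λ` with `l` boxes, the Schur module `𝕊_λ(V)` — realized as the image of the
Young symmetrizer acting on `V^{⊗l}` — is zero if and only if the Young diagram of `λ`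
has strictly more than `n` rows. -/
theorem stmt_3 (K V : Type) [Field K] [CharZero K] [AddCommGroup V] [Module K V]
    [FiniteDimensional K V] (n : ℕ) (hn : Module.finrank K V = n)
    (l : ℕ) (μ : YoungDiagram) (T : ↥μ.cells ≃ Fin l) :
    LinearMap.range (youngSymmetrizerAction K V l μ T) = ⊥ ↔ n < μ.colLen 0 := by
  classical
  constructor
  · -- if the symmetrizer vanishes then there are more than n rows
    intro h
    by_contra hlt
    push_neg at hlt
    have hc0 : youngSymmetrizerAction K V l μ T = 0 := LinearMap.range_eq_bot.1 h
    set b := Module.finBasisOfFinrankEq K V hn with hb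
    have hg : ∀ i : Fin l, ((T.symm i : ℕ × ℕ)).1 < n := by
      intro i
      have hmem : ((T.symm i : ℕ × ℕ)) ∈ μ := (YoungDiagram.mem_cells _).1 (T.symm i).2
      have h2 : (((T.symm i : ℕ × ℕ)).1, 0) ∈ μ :=
        μ.up_left_mem (le_refl _) (Nat.zero_le ((T.symm i : ℕ × ℕ)).2) (by simpa using hmem)
      have := YoungDiagram.mem_iff_lt_colLen.1 h2
      omega
    set g : Fin l → Fin n := fun i => ⟨((T.symm i : ℕ × ℕ)).1, hg i⟩ with hgdef
    have hgp : ∀ p : Equiv.Perm (Fin l),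
        (∀ i, ((T.symm (p i)) : ℕ × ℕ).1 = ((T.symm i) : ℕ × ℕ).1) →
        ∀ x, g (p x) = g x := by
      intro p hp x
      apply Fin.ext
      exact hp x
    set v := PiTensorProduct.tprod K (fun i => b (g i)) with hv
    set φ : PiTensorProduct K (fun _ : Fin l => V) →ₗ[K] K :=
      PiTensorProduct.lift ((MultilinearMap.mkPiAlgebra K (Fin l) K).compLinearMap
        (fun i => b.coord (g i))) with hφ
    have hcoord : ∀ j k : Fin n, b.coord j (b k) = if k = j then 1 else 0 := by
      intro j k
      rw [Module.Basis.coord_apply, Module.Basis.repr_self_apply]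
    have hφv : φ (youngSymmetrizerAction K V l μ T v) =
        ((Finset.univ.filter (fun p : Equiv.Perm (Fin l) =>
           ∀ i, ((T.symm (p i)) : ℕ × ℕ).1 = ((T.symm i) : ℕ × ℕ).1)).card : K) := by
      unfold youngSymmetrizerAction
      rw [hv]
      simp only [LinearMap.coe_sum, Finset.sum_apply, LinearMap.smul_apply,
        LinearEquiv.coe_toLinearMap, PiTensorProduct.reindex_tprod, map_sum, map_smul, hφ,
        PiTensorProduct.lift.tprod, MultilinearMap.compLinearMap_apply,
        MultilinearMap.mkPiAlgebra_apply, hcoord, smul_eq_mul, prod_boolean]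
      have hq1 : ∀ p : Equiv.Perm (Fin l),
          (∀ i, ((T.symm (p i)) : ℕ × ℕ).1 = ((T.symm i) : ℕ × ℕ).1) →
          ∀ q : Equiv.Perm (Fin l),
          (∀ i, ((T.symm (q i)) : ℕ × ℕ).2 = ((T.symm i) : ℕ × ℕ).2) →
          ((∀ i, g ((p * q).symm i) = g i) ↔ q = 1) := by
        intro p hp q hq
        have hmul : ∀ i, (p * q).symm i = q.symm (p.symm i) := fun i => by
          simp [Equiv.Perm.mul_def, Equiv.symm_trans_apply]
        constructor
        · intro hE
          have hgq : ∀ m, g (q.symm m) = g m := by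
            intro m
            have h3 := hE (p m)
            rw [hmul, Equiv.symm_apply_apply] at h3
            exact h3.trans (hgp p hp m)
          have hqm : ∀ m, q.symm m = m := by
            intro m
            have hrow : ((T.symm (q.symm m) : ℕ × ℕ)).1 = ((T.symm m : ℕ × ℕ)).1 := by
              simpa [hgdef] using congrArg Fin.val (hgq m)
            have hcol : ((T.symm (q.symm m) : ℕ × ℕ)).2 = ((T.symm m : ℕ × ℕ)).2 := by
              have h4 := hq (q.symm m)
              rw [Equiv.apply_symm_apply] at h4
              exact h4.symm
            exact T.symm.injective (Subtype.ext (Prod.ext hrow hcol))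
          ext m
          have h5 := hqm (q m)
          rw [Equiv.symm_apply_apply] at h5
          rw [Equiv.Perm.one_apply]
          exact congrArg Fin.val h5.symm
        · rintro rfl
          intro i
          rw [mul_one, ← hgp p hp (p.symm i), Equiv.apply_symm_apply]
      have hcond : ∀ p q : Equiv.Perm (Fin l),
          ((∀ i, g ((p * q).symm i) = g i)
            ∧ ((∀ i, ((T.symm (p i)) : ℕ × ℕ).1 = ((T.symm i) : ℕ × ℕ).1)
            ∧ (∀ i, ((T.symm (q i)) : ℕ × ℕ).2 = ((T.symm i) : ℕ × ℕ).2)))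
          = (q = 1 ∧ (∀ i, ((T.symm (p i)) : ℕ × ℕ).1 = ((T.symm i) : ℕ × ℕ).1)) := by
        intro p q
        apply propext
        constructor
        · rintro ⟨hE, ⟨hp, hq⟩⟩
          exact ⟨(hq1 p hp q hq).1 hE, hp⟩
        · rintro ⟨rfl, hp⟩
          exact ⟨(hq1 p hp 1 (fun i => rfl)).2 rfl, ⟨hp, fun i => rfl⟩⟩
      simp only [ite_mul, zero_mul, mul_ite, mul_one, mul_zero]
      simp only [← ite_and]
      simp only [hcond]
      simp only [ite_and]
      simp only [Finset.sum_ite_eq', Finset.mem_univ, if_true]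
      simp only [Equiv.Perm.sign_one, Units.val_one, Int.cast_one]
      rw [Finset.sum_boole]
    rw [hc0] at hφv
    simp only [LinearMap.zero_apply, map_zero] at hφv
    have hmem1 : (1 : Equiv.Perm (Fin l)) ∈ Finset.univ.filter
        (fun p : Equiv.Perm (Fin l) =>
          ∀ i, ((T.symm (p i)) : ℕ × ℕ).1 = ((T.symm i) : ℕ × ℕ).1) :=
      Finset.mem_filter.2 ⟨Finset.mem_univ _, fun i => rfl⟩
    have hcardne := Finset.card_ne_zero_of_mem hmem1
    rw [eq_comm, Nat.cast_eq_zero] at hφv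
    exact hcardne hφv
  · -- more than n rows: the symmetrizer vanishes
    intro hgt
    rw [LinearMap.range_eq_bot]
    have hcard : Module.finrank K V < Fintype.card {i : Fin l // ((T.symm i : ℕ × ℕ)).2 = 0} := by
      rw [card_col0 μ T, hn]
      exact hgt
    have key : ∀ g : Fin l → V,
        ∑ q ∈ Finset.univ.filter (fun q : Equiv.Perm (Fin l) =>
            ∀ i, ((T.symm (q i)) : ℕ × ℕ).2 = ((T.symm i) : ℕ × ℕ).2),
          ((Equiv.Perm.sign q : ℤ) : K) •
            PiTensorProduct.tprod K (fun i => g (q.symm i)) = 0 := by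
      intro g
      apply signed_sum_eq_zero _ hcard _ _ g
      intro i j _ q hq m
      have hswap : ∀ x, ((T.symm (Equiv.swap (i : Fin l) (j : Fin l) x) : ℕ × ℕ)).2
          = ((T.symm x : ℕ × ℕ)).2 := by
        intro x
        rcases eq_or_ne x ↑i with rfl | hxi
        · rw [Equiv.swap_apply_left, j.2, i.2]
        rcases eq_or_ne x ↑j with rfl | hxj
        · rw [Equiv.swap_apply_right, j.2, i.2]
        · rw [Equiv.swap_apply_of_ne_of_ne hxi hxj]
      calc ((T.symm ((q * Equiv.swap (i : Fin l) (j : Fin l)) m) : ℕ × ℕ)).2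
          = ((T.symm (q (Equiv.swap (i : Fin l) (j : Fin l) m)) : ℕ × ℕ)).2 := rfl
        _ = ((T.symm (Equiv.swap (i : Fin l) (j : Fin l) m) : ℕ × ℕ)).2 := hq _
        _ = _ := hswap m
    apply PiTensorProduct.ext
    apply MultilinearMap.ext
    intro f
    simp only [LinearMap.compMultilinearMap_apply, LinearMap.zero_apply,
      LinearMap.zero_comp]
    unfold youngSymmetrizerAction
    simp only [LinearMap.coe_sum, Finset.sum_apply, LinearMap.smul_apply,
      LinearEquiv.coe_toLinearMap, PiTensorProduct.reindex_tprod]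
    apply Finset.sum_eq_zero
    intro p _
    by_cases hp : (∀ i, ((T.symm (p i)) : ℕ × ℕ).1 = ((T.symm i) : ℕ × ℕ).1)
    · have h1 : ∀ q : Equiv.Perm (Fin l),
          (if (∀ i, ((T.symm (p i)) : ℕ × ℕ).1 = ((T.symm i) : ℕ × ℕ).1)
              ∧ (∀ i, ((T.symm (q i)) : ℕ × ℕ).2 = ((T.symm i) : ℕ × ℕ).2)
            then ((Equiv.Perm.sign q : ℤ) : K) else 0) •
            PiTensorProduct.tprod K (fun i => f ((p * q).symm i))
          = (PiTensorProduct.reindex K (fun _ : Fin l => V) p)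
              ((if (∀ i, ((T.symm (q i)) : ℕ × ℕ).2 = ((T.symm i) : ℕ × ℕ).2)
                 then ((Equiv.Perm.sign q : ℤ) : K) else 0) •
                PiTensorProduct.tprod K (fun j => f (q.symm j))) := by
        intro q
        rw [map_smul, PiTensorProduct.reindex_tprod,
          if_congr (and_iff_right hp) rfl rfl]
        have harg : (fun i => f ((p * q).symm i)) = fun i => f (q.symm (p.symm i)) := by
          funext i
          simp [Equiv.Perm.mul_def, Equiv.symm_trans_apply]
        rw [harg]
      rw [Finset.sum_congr rfl (fun q _ => h1 q), ← map_sum]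
      have hsum : (∑ q : Equiv.Perm (Fin l),
          (if (∀ i, ((T.symm (q i)) : ℕ × ℕ).2 = ((T.symm i) : ℕ × ℕ).2)
            then ((Equiv.Perm.sign q : ℤ) : K) else 0) •
            PiTensorProduct.tprod K (fun j => f (q.symm j))) = 0 := by
        simp only [ite_smul, zero_smul]
        rw [← Finset.sum_filter]
        exact key f
      rw [hsum, map_zero]
    · apply Finset.sum_eq_zero
      intro q _
      rw [if_neg, zero_smul]
      exact fun hc => hp hc.1
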